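/- Fix an integer n ≥ 1 and let (c_m)_{m≥0} be the associated recursively defined sequence. Then there exists a real constant C ≥ 1 such that |c_m| ≤ C^m for every m ≥ 0. Consequently, the real power series Σ_{m≥0} ((−1)^m c_m / (2n+1)^m) x^m has a positive radius of convergence. -/

import Mathlib

namespace Stmt4Aux

def w (m : ℕ) : ℚ := 1 / ((m : ℚ) + 1) ^ 2

lemma w_pos (m : ℕ) : 0 < w m := by unfold w; positivity

lemma w_le_one (m : ℕ) : w m ≤ 1 := by
  unfold w
  rw [div_le_one (by positivity)]
  nlinarith [Nat.cast_nonneg (α := ℚ) m]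

lemma w_zero : w 0 = 1 := by norm_num [w]

lemma sum_w (N : ℕ) : ∑ a ∈ Finset.range N, w a ≤ 2 := by
  have h : ∀ N : ℕ, ∑ a ∈ Finset.range N, w a ≤ 2 - 2 / ((N : ℚ) + 1) := by
    intro N
    induction N with
    | zero => simp
    | succ N ih =>
      rw [Finset.sum_range_succ]
      have h1 : (0:ℚ) < (N:ℚ) + 1 := by positivity
      have h2 : (0:ℚ) < (N:ℚ) + 2 := by positivity
      have hw : w N ≤ 2 / ((N:ℚ)+1) - 2/((N:ℚ)+2) := by
        unfold w
        rw [div_sub_div _ _ (ne_of_gt h1) (ne_of_gt h2),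
          div_le_div_iff₀ (by positivity) (by positivity)]
        nlinarith [Nat.cast_nonneg (α := ℚ) N]
      have hcast : ((N+1 : ℕ) : ℚ) = (N:ℚ) + 1 := by push_cast; ring
      have e : (N:ℚ) + 1 + 1 = (N:ℚ) + 2 := by ring
      rw [hcast, e]
      linarith
  have h2 : (0:ℚ) < 2 / ((N:ℚ)+1) := by positivity
  linarith [h N]

lemma conv2 (m : ℕ) : ∑ p ∈ Finset.HasAntidiagonal.antidiagonal m, w p.1 * w p.2 ≤ 16 * w m := by
  have main : ∀ a b : ℕ, a + b = m → b ≤ a → w a * w b ≤ 4 * w m * (w a + w b) := by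
    intro a b hab hba
    have h4 : w a ≤ 4 * w m := by
      unfold w
      have e : 4 * (1/((m:ℚ)+1)^2) = 4 / ((m:ℚ)+1)^2 := by ring
      rw [e, div_le_div_iff₀ (by positivity) (by positivity)]
      have hm : (m:ℚ) ≤ 2 * (a:ℚ) := by
        have : m ≤ 2 * a := by omega
        exact_mod_cast this
      nlinarith [Nat.cast_nonneg (α := ℚ) a, Nat.cast_nonneg (α := ℚ) m]
    nlinarith [w_pos a, w_pos b, w_pos m]
  have key : ∀ p ∈ Finset.HasAntidiagonal.antidiagonal m, w p.1 * w p.2 ≤ 4 * w m * (w p.1 + w p.2) := by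
    intro p hp
    rw [Finset.HasAntidiagonal.mem_antidiagonal] at hp
    rcases le_total p.2 p.1 with h | h
    · exact main p.1 p.2 hp h
    · have := main p.2 p.1 (by omega) h
      linarith [this]
  calc ∑ p ∈ Finset.HasAntidiagonal.antidiagonal m, w p.1 * w p.2
      ≤ ∑ p ∈ Finset.HasAntidiagonal.antidiagonal m, 4 * w m * (w p.1 + w p.2) := Finset.sum_le_sum key
    _ = 4 * w m * ((∑ p ∈ Finset.HasAntidiagonal.antidiagonal m, w p.1)
          + (∑ p ∈ Finset.HasAntidiagonal.antidiagonal m, w p.2)) := by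
        rw [← Finset.sum_add_distrib, ← Finset.mul_sum]
    _ ≤ 4 * w m * (2 + 2) := by
        have hp1 : (∑ p ∈ Finset.HasAntidiagonal.antidiagonal m, w p.1) ≤ 2 := by
          rw [Finset.Nat.sum_antidiagonal_eq_sum_range_succ_mk]
          exact sum_w (m+1)
        have hp2 : (∑ p ∈ Finset.HasAntidiagonal.antidiagonal m, w p.2) ≤ 2 := by
          rw [Finset.Nat.sum_antidiagonal_eq_sum_range_succ_mk]
          calc ∑ k ∈ Finset.range (m+1), w (m - k)
              = ∑ k ∈ Finset.range (m+1), w k := by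
                rw [← Finset.sum_range_reflect]
                apply Finset.sum_congr rfl
                intro k hk
                rw [Finset.mem_range] at hk
                exact congrArg w (by omega)
            _ ≤ 2 := sum_w (m+1)
        have := w_pos m
        nlinarith
    _ = 16 * w m := by ring

lemma convPi {ι : Type*} [DecidableEq ι] (s : Finset ι) (m : ℕ) :
    ∑ f ∈ s.piAntidiag m, ∏ i ∈ s, w (f i) ≤ 16 ^ s.card * w m := by
  induction s using Finset.cons_induction generalizing m with
  | empty =>
    rcases Nat.eq_zero_or_pos m with rfl | hm
    · simp [w_zero]
    · rw [Finset.piAntidiag_empty_of_ne_zero (by omega)]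
      simp only [Finset.sum_empty, Finset.card_empty, pow_zero, one_mul]
      exact le_of_lt (w_pos m)
  | cons i s hi ih =>
    rw [Finset.piAntidiag_cons hi, Finset.sum_disjiUnion]
    have step : ∀ p ∈ Finset.HasAntidiagonal.antidiagonal m,
        (∑ f ∈ (s.piAntidiag p.2).map (addRightEmbedding fun t => if t = i then p.1 else 0),
          ∏ j ∈ Finset.cons i s hi, w (f j)) ≤ 16 ^ s.card * (w p.1 * w p.2) := by
      intro p _
      rw [Finset.sum_map]
      have hcongr : ∀ g ∈ s.piAntidiag p.2,
          (∏ j ∈ Finset.cons i s hi,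
            w ((addRightEmbedding fun t => if t = i then p.1 else 0) g j))
            = w p.1 * ∏ j ∈ s, w (g j) := by
        intro g hg
        rw [Finset.mem_piAntidiag] at hg
        have hgi : g i = 0 := by
          by_contra h; exact hi (hg.2 i h)
        rw [Finset.prod_cons]
        congr 1
        · simp [addRightEmbedding, hgi]
        · apply Finset.prod_congr rfl
          intro j hj
          have hji : j ≠ i := fun h => hi (h ▸ hj)
          simp [addRightEmbedding, hji]
      rw [Finset.sum_congr rfl hcongr, ← Finset.mul_sum]
      calc w p.1 * ∑ g ∈ s.piAntidiag p.2, ∏ j ∈ s, w (g j)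
          ≤ w p.1 * (16 ^ s.card * w p.2) :=
            mul_le_mul_of_nonneg_left (ih p.2) (le_of_lt (w_pos p.1))
        _ = 16 ^ s.card * (w p.1 * w p.2) := by ring
    calc ∑ p ∈ Finset.HasAntidiagonal.antidiagonal m, (∑ f ∈ (s.piAntidiag p.2).map
            (addRightEmbedding fun t => if t = i then p.1 else 0),
            ∏ j ∈ Finset.cons i s hi, w (f j))
        ≤ ∑ p ∈ Finset.HasAntidiagonal.antidiagonal m, 16 ^ s.card * (w p.1 * w p.2) :=
          Finset.sum_le_sum step
      _ = 16 ^ s.card * ∑ p ∈ Finset.HasAntidiagonal.antidiagonal m, w p.1 * w p.2 := by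
          rw [Finset.mul_sum]
      _ ≤ 16 ^ s.card * (16 * w m) :=
          mul_le_mul_of_nonneg_left (conv2 m) (by positivity)
      _ = 16 ^ (Finset.cons i s hi).card * w m := by
          rw [Finset.card_cons]
          ring
lemma convTuple (k m : ℕ) :
    ∑ j ∈ Finset.Nat.antidiagonalTuple k m, ∏ i, w (j i) ≤ 16 ^ k * w m := by
  rw [← Finset.piAntidiag_univ_fin_eq_antidiagonalTuple m k]
  simpa [Finset.card_univ] using convPi (Finset.univ : Finset (Fin k)) m

def A (n : ℕ) : ℚ := 16 ^ (4*n+4)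

def eps (n : ℕ) : ℚ := 1 / (2 * 16 ^ (2*n+1))

noncomputable def E (n : ℕ) (ℓ : ℕ) : ℚ := if ℓ = 0 then 1 else eps n * A n ^ ℓ * w ℓ

lemma A_pos (n : ℕ) : 0 < A n := by unfold A; positivity

lemma one_le_A (n : ℕ) : 1 ≤ A n := by
  unfold A; exact one_le_pow₀ (by norm_num)

lemma eps_pos (n : ℕ) : 0 < eps n := by unfold eps; positivity

lemma eps_le_one (n : ℕ) : eps n ≤ 1 := by
  unfold eps
  rw [div_le_one (by positivity)]
  have : (1:ℚ) ≤ 16 ^ (2*n+1) := one_le_pow₀ (by norm_num)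
  linarith

lemma E_le (n ℓ : ℕ) : E n ℓ ≤ A n ^ ℓ * w ℓ := by
  unfold E
  split_ifs with h
  · subst h; rw [w_zero]; norm_num
  · have h1 : 0 < A n ^ ℓ * w ℓ := mul_pos (pow_pos (A_pos n) ℓ) (w_pos ℓ)
    nlinarith [eps_le_one n, eps_pos n]

lemma E_nonneg (n ℓ : ℕ) : 0 ≤ E n ℓ := by
  unfold E
  split_ifs with h
  · norm_num
  · exact le_of_lt (mul_pos (mul_pos (eps_pos n) (pow_pos (A_pos n) ℓ)) (w_pos ℓ))

lemma scalar_id (n : ℕ) :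
    4 * 16 ^ (2*n+2) + eps n ^ 2 * 16 ^ (2*n+1) * A n = eps n * A n := by
  have hA : A n = 16 ^ (2*n+1) * 16 ^ (2*n+1) * 16 ^ 2 := by
    unfold A
    rw [← pow_add, ← pow_add]
    congr 1
    omega
  have h2 : (16:ℚ) ^ (2*n+2) = 16 ^ (2*n+1) * 16 := by rw [pow_succ]
  have hP : (0:ℚ) < 16 ^ (2*n+1) := by positivity
  unfold eps
  rw [hA, h2]
  field_simp
  ring

end Stmt4Aux

open Stmt4Aux in
theorem statement4 (n : ℕ) (hn : 1 ≤ n) (c : ℕ → ℚ)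
    (hc0 : c 0 = 1)
    (hcrec : ∀ m : ℕ, 1 ≤ m →
      c m = (∑ ℓ ∈ Finset.Nat.antidiagonalTuple (2 * n + 2) (m - 1), ∏ i, c (ℓ i))
        - 1 / (2 * (n : ℚ) + 1) *
          ∑ j ∈ (Finset.Nat.antidiagonalTuple (2 * n + 1) m).filter
              (fun j => ∀ i, j i ≤ m - 1), ∏ i, c (j i)) :
    (∃ C : ℝ, 1 ≤ C ∧ ∀ m : ℕ, |(c m : ℝ)| ≤ C ^ m) ∧
    (∃ ρ : ℝ, 0 < ρ ∧ ∀ x : ℝ, |x| < ρ →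
      Summable fun m : ℕ => (-1 : ℝ) ^ m * (c m : ℝ) / (2 * (n : ℝ) + 1) ^ m * x ^ m) := by
  -- main inductive bound
  have key : ∀ m : ℕ, |c m| ≤ E n m := by
    intro m
    induction m using Nat.strong_induction_on with
    | _ m ih =>
    rcases Nat.eq_zero_or_pos m with rfl | hm
    · simp [hc0, E]
    · have hm1 : 1 ≤ m := hm
      have hrec := hcrec m hm1
      -- bound for the first sum, termwise
      have hprod1 : ∀ ℓ ∈ Finset.Nat.antidiagonalTuple (2*n+2) (m-1),
          |∏ i, c (ℓ i)| ≤ A n ^ (m-1) * ∏ i, w (ℓ i) := by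
        intro ℓ hℓ
        rw [Finset.Nat.mem_antidiagonalTuple] at hℓ
        rw [Finset.abs_prod]
        calc (∏ i, |c (ℓ i)|) ≤ ∏ i, (A n ^ (ℓ i) * w (ℓ i)) := by
              apply Finset.prod_le_prod (fun i _ => abs_nonneg _)
              intro i _
              refine (ih (ℓ i) ?_).trans (E_le n (ℓ i))
              have : ℓ i ≤ m - 1 := hℓ ▸ Finset.single_le_sum
                (fun j _ => Nat.zero_le (ℓ j)) (Finset.mem_univ i)
              omega
          _ = A n ^ (m-1) * ∏ i, w (ℓ i) := by
              rw [Finset.prod_mul_distrib, Finset.prod_pow_eq_pow_sum, hℓ]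
      have hS1 : |∑ ℓ ∈ Finset.Nat.antidiagonalTuple (2*n+2) (m-1), ∏ i, c (ℓ i)|
          ≤ A n ^ (m-1) * (16 ^ (2*n+2) * w (m-1)) := by
        calc |∑ ℓ ∈ Finset.Nat.antidiagonalTuple (2*n+2) (m-1), ∏ i, c (ℓ i)|
            ≤ ∑ ℓ ∈ Finset.Nat.antidiagonalTuple (2*n+2) (m-1), |∏ i, c (ℓ i)| :=
              Finset.abs_sum_le_sum_abs _ _
          _ ≤ ∑ ℓ ∈ Finset.Nat.antidiagonalTuple (2*n+2) (m-1),
                A n ^ (m-1) * ∏ i, w (ℓ i) := Finset.sum_le_sum hprod1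
          _ = A n ^ (m-1) * ∑ ℓ ∈ Finset.Nat.antidiagonalTuple (2*n+2) (m-1),
                ∏ i, w (ℓ i) := by rw [Finset.mul_sum]
          _ ≤ A n ^ (m-1) * (16 ^ (2*n+2) * w (m-1)) := by
              apply mul_le_mul_of_nonneg_left (convTuple _ _)
              exact le_of_lt (pow_pos (A_pos n) _)
      -- bound for the second (filtered) sum, termwise
      have hprod2 : ∀ j ∈ (Finset.Nat.antidiagonalTuple (2*n+1) m).filter
            (fun j => ∀ i, j i ≤ m - 1),
          |∏ i, c (j i)| ≤ eps n ^ 2 * (A n ^ m * ∏ i, w (j i)) := by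
        intro j hj
        rw [Finset.mem_filter, Finset.Nat.mem_antidiagonalTuple] at hj
        obtain ⟨hjsum, hjle⟩ := hj
        -- two distinct nonzero indices
        have h1 : ∃ i1, j i1 ≠ 0 := by
          by_contra h
          push_neg at h
          have : ∑ i, j i = 0 := Finset.sum_eq_zero (fun i _ => h i)
          omega
        obtain ⟨i1, hi1⟩ := h1
        have h2 : ∃ i2, i2 ≠ i1 ∧ j i2 ≠ 0 := by
          by_contra h
          push_neg at h
          have hsingle : ∑ i, j i = j i1 :=
            Finset.sum_eq_single i1 (fun b _ hb => h b hb) (by simp)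
          have := hjle i1
          omega
        obtain ⟨i2, hi21, hi2⟩ := h2
        have hpair : i1 ∉ ({i2} : Finset (Fin (2*n+1))) := by
          simp only [Finset.mem_singleton]
          exact fun h => hi21 h.symm
        have hEb : ∀ i, E n (j i) ≤
            (if i ∈ ({i1, i2} : Finset (Fin (2*n+1))) then eps n else 1)
              * (A n ^ (j i) * w (j i)) := by
          intro i
          by_cases hmem : i ∈ ({i1, i2} : Finset (Fin (2*n+1)))
          · rw [if_pos hmem]
            have hji : j i ≠ 0 := by
              rcases Finset.mem_insert.mp hmem with rfl | h
              · exact hi1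
              · rw [Finset.mem_singleton] at h
                exact h ▸ hi2
            unfold E
            rw [if_neg hji]
            ring_nf
            exact le_refl _
          · rw [if_neg hmem, one_mul]
            exact E_le n (j i)
        calc |∏ i, c (j i)| = ∏ i, |c (j i)| := Finset.abs_prod _ _
          _ ≤ ∏ i, E n (j i) := by
              apply Finset.prod_le_prod (fun i _ => abs_nonneg _)
              intro i _
              apply ih (j i)
              have := hjle i
              omega
          _ ≤ ∏ i, ((if i ∈ ({i1, i2} : Finset (Fin (2*n+1))) then eps n else 1)
                * (A n ^ (j i) * w (j i))) := by
              apply Finset.prod_le_prod (fun i _ => E_nonneg n (j i)) (fun i _ => hEb i)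
          _ = eps n ^ 2 * (A n ^ m * ∏ i, w (j i)) := by
              rw [Finset.prod_mul_distrib, Finset.prod_ite_mem, Finset.univ_inter,
                Finset.prod_const, Finset.card_insert_of_notMem hpair,
                Finset.card_singleton, Finset.prod_mul_distrib,
                Finset.prod_pow_eq_pow_sum, hjsum]
      have hsub : (Finset.Nat.antidiagonalTuple (2*n+1) m).filter
          (fun j => ∀ i, j i ≤ m - 1) ⊆ Finset.Nat.antidiagonalTuple (2*n+1) m :=
        Finset.filter_subset _ _
      have hS2 : |∑ j ∈ (Finset.Nat.antidiagonalTuple (2*n+1) m).filter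
            (fun j => ∀ i, j i ≤ m - 1), ∏ i, c (j i)|
          ≤ eps n ^ 2 * (A n ^ m * (16 ^ (2*n+1) * w m)) := by
        calc |∑ j ∈ (Finset.Nat.antidiagonalTuple (2*n+1) m).filter
              (fun j => ∀ i, j i ≤ m - 1), ∏ i, c (j i)|
            ≤ ∑ j ∈ (Finset.Nat.antidiagonalTuple (2*n+1) m).filter
              (fun j => ∀ i, j i ≤ m - 1), |∏ i, c (j i)| :=
              Finset.abs_sum_le_sum_abs _ _
          _ ≤ ∑ j ∈ (Finset.Nat.antidiagonalTuple (2*n+1) m).filter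
              (fun j => ∀ i, j i ≤ m - 1), eps n ^ 2 * (A n ^ m * ∏ i, w (j i)) :=
              Finset.sum_le_sum hprod2
          _ = eps n ^ 2 * A n ^ m * ∑ j ∈ (Finset.Nat.antidiagonalTuple (2*n+1) m).filter
              (fun j => ∀ i, j i ≤ m - 1), ∏ i, w (j i) := by
              rw [Finset.mul_sum]
              apply Finset.sum_congr rfl
              intro j _
              ring
          _ ≤ eps n ^ 2 * A n ^ m * ∑ j ∈ Finset.Nat.antidiagonalTuple (2*n+1) m,
              ∏ i, w (j i) := by
              apply mul_le_mul_of_nonneg_left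
              · apply Finset.sum_le_sum_of_subset_of_nonneg hsub
                intro j _ _
                apply Finset.prod_nonneg
                intro i _
                exact le_of_lt (w_pos _)
              · exact le_of_lt (mul_pos (pow_pos (eps_pos n) 2) (pow_pos (A_pos n) m))
          _ ≤ eps n ^ 2 * A n ^ m * (16 ^ (2*n+1) * w m) := by
              apply mul_le_mul_of_nonneg_left (convTuple _ _)
              exact le_of_lt (mul_pos (pow_pos (eps_pos n) 2) (pow_pos (A_pos n) m))
          _ = eps n ^ 2 * (A n ^ m * (16 ^ (2*n+1) * w m)) := by ring
      -- combine
      have hcoef : (0:ℚ) ≤ 1 / (2 * (n:ℚ) + 1) := by positivity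
      have hcoef1 : 1 / (2 * (n:ℚ) + 1) ≤ 1 := by
        rw [div_le_one (by positivity)]
        have : (0:ℚ) ≤ (n:ℚ) := Nat.cast_nonneg n
        linarith
      have habs : |c m| ≤ A n ^ (m-1) * (16 ^ (2*n+2) * w (m-1))
          + eps n ^ 2 * (A n ^ m * (16 ^ (2*n+1) * w m)) := by
        rw [hrec]
        calc |_ - _| ≤ |∑ ℓ ∈ Finset.Nat.antidiagonalTuple (2*n+2) (m-1), ∏ i, c (ℓ i)|
              + |1 / (2 * (n:ℚ) + 1) *
                ∑ j ∈ (Finset.Nat.antidiagonalTuple (2*n+1) m).filter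
                  (fun j => ∀ i, j i ≤ m - 1), ∏ i, c (j i)| := abs_sub _ _
          _ ≤ A n ^ (m-1) * (16 ^ (2*n+2) * w (m-1))
              + eps n ^ 2 * (A n ^ m * (16 ^ (2*n+1) * w m)) := by
            apply add_le_add hS1
            rw [abs_mul, abs_of_nonneg hcoef]
            calc 1 / (2 * (n:ℚ) + 1) * |_| ≤ 1 * |_| := by
                  apply mul_le_mul_of_nonneg_right hcoef1 (abs_nonneg _)
              _ ≤ _ := by rw [one_mul]; exact hS2
      -- final arithmetic
      have hwpred : w (m-1) ≤ 4 * w m := by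
        unfold w
        have e : 4 * (1/((m:ℚ)+1)^2) = 4 / ((m:ℚ)+1)^2 := by ring
        rw [e, div_le_div_iff₀ (by positivity) (by positivity)]
        have hc1 : ((m-1 : ℕ) : ℚ) = (m:ℚ) - 1 := by
          have : (1:ℕ) ≤ m := hm1
          push_cast [this]
          ring
        rw [hc1]
        have : (1:ℚ) ≤ (m:ℚ) := by exact_mod_cast hm1
        nlinarith
      have hAm : A n ^ m = A n ^ (m-1) * A n := by
        conv_lhs => rw [← Nat.sub_add_cancel hm1]
        rw [pow_succ]
      have hEm : E n m = eps n * A n ^ m * w m := by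
        unfold E
        rw [if_neg (by omega)]
      rw [hEm]
      have hfin : A n ^ (m-1) * (16 ^ (2*n+2) * w (m-1))
          + eps n ^ 2 * (A n ^ m * (16 ^ (2*n+1) * w m)) ≤ eps n * A n ^ m * w m := by
        have h1 : A n ^ (m-1) * (16 ^ (2*n+2) * w (m-1))
            ≤ (4 * 16 ^ (2*n+2)) * (A n ^ (m-1) * w m) := by
          have hA1 : (0:ℚ) ≤ A n ^ (m-1) := le_of_lt (pow_pos (A_pos n) _)
          have h16 : (0:ℚ) < (16:ℚ) ^ (2*n+2) := by positivity
          nlinarith [mul_le_mul_of_nonneg_left hwpred (mul_nonneg hA1 (le_of_lt h16))]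
        have h2 : eps n ^ 2 * (A n ^ m * (16 ^ (2*n+1) * w m))
            = (eps n ^ 2 * 16 ^ (2*n+1) * A n) * (A n ^ (m-1) * w m) := by
          rw [hAm]; ring
        have h3 : eps n * A n ^ m * w m = (eps n * A n) * (A n ^ (m-1) * w m) := by
          rw [hAm]; ring
        rw [h2, h3]
        calc A n ^ (m-1) * (16 ^ (2*n+2) * w (m-1))
              + (eps n ^ 2 * 16 ^ (2*n+1) * A n) * (A n ^ (m-1) * w m)
            ≤ (4 * 16 ^ (2*n+2)) * (A n ^ (m-1) * w m)
              + (eps n ^ 2 * 16 ^ (2*n+1) * A n) * (A n ^ (m-1) * w m) := by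
              linarith [h1]
          _ = (4 * 16 ^ (2*n+2) + eps n ^ 2 * 16 ^ (2*n+1) * A n)
              * (A n ^ (m-1) * w m) := by ring
          _ = (eps n * A n) * (A n ^ (m-1) * w m) := by rw [scalar_id n]
      exact habs.trans hfin
  -- conclude
  have keyA : ∀ m : ℕ, |c m| ≤ A n ^ m := by
    intro m
    refine (key m).trans ((E_le n m).trans ?_)
    have h1 : (0:ℚ) ≤ A n ^ m := le_of_lt (pow_pos (A_pos n) _)
    nlinarith [w_le_one m, w_pos m]
  constructor
  · refine ⟨((A n : ℚ) : ℝ), ?_, ?_⟩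
    · exact_mod_cast one_le_A n
    · intro m
      have h := keyA m
      have h2 : ((|c m| : ℚ) : ℝ) ≤ (((A n : ℚ) : ℝ)) ^ m := by exact_mod_cast h
      rw [Rat.cast_abs] at h2
      exact h2
  · refine ⟨(((A n : ℚ) : ℝ))⁻¹, ?_, ?_⟩
    · have : (0:ℝ) < ((A n : ℚ) : ℝ) := by exact_mod_cast A_pos n
      positivity
    · intro x hx
      have hApos : (0:ℝ) < ((A n : ℚ) : ℝ) := by exact_mod_cast A_pos n
      have hr : ((A n : ℚ) : ℝ) * |x| < 1 := by
        have := mul_lt_mul_of_pos_left hx hApos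
        rwa [mul_inv_cancel₀ (ne_of_gt hApos)] at this
      apply Summable.of_norm_bounded
        (summable_geometric_of_lt_one (by positivity) hr)
      intro m
      have hb : |(c m : ℝ)| ≤ ((A n : ℚ) : ℝ) ^ m := by
        have h := keyA m
        have h2 : ((|c m| : ℚ) : ℝ) ≤ (((A n : ℚ) : ℝ)) ^ m := by exact_mod_cast h
        rw [Rat.cast_abs] at h2
        exact h2
      have hd : (1:ℝ) ≤ (2 * (n:ℝ) + 1) ^ m := by
        apply one_le_pow₀
        have : (0:ℝ) ≤ (n:ℝ) := Nat.cast_nonneg n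
        linarith
      rw [Real.norm_eq_abs]
      calc |(-1 : ℝ) ^ m * (c m : ℝ) / (2 * (n : ℝ) + 1) ^ m * x ^ m|
          = |(c m : ℝ)| / (2 * (n:ℝ) + 1) ^ m * |x| ^ m := by
            rw [abs_mul, abs_div, abs_mul, abs_pow, abs_pow, abs_neg, abs_one, one_pow,
              abs_of_nonneg (by positivity : (0:ℝ) ≤ 2 * (n:ℝ) + 1), one_mul, abs_pow]
        _ ≤ |(c m : ℝ)| * |x| ^ m := by
            apply mul_le_mul_of_nonneg_right _ (by positivity)
            exact div_le_self (abs_nonneg _) hd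
        _ ≤ ((A n : ℚ) : ℝ) ^ m * |x| ^ m := by
            apply mul_le_mul_of_nonneg_right hb (by positivity)
        _ = (((A n : ℚ) : ℝ) * |x|) ^ m := by rw [mul_pow]
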